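/- If a nonzero monic polynomial p ∈ ℂ[z] of minimal degree annihilates A = (a_{ij}) ∈ ℂ^{M×N} under the convolution calculus (p_⋄(A) = 0), then p(z) = (z - a_{00})^κ for some integer κ with 1 ≤ κ ≤ M+N-1. -/

import Mathlib

noncomputable def conv {M N : ℕ} (A B : Matrix (Fin M) (Fin N) ℂ) : Matrix (Fin M) (Fin N) ℂ :=
  fun i j => ∑ l ∈ Finset.Iic i, ∑ k ∈ Finset.Iic j, A l k * B (i - l) (j - k)

noncomputable def convId {M N : ℕ} : Matrix (Fin M) (Fin N) ℂ :=
  fun i j => if i.1 = 0 ∧ j.1 = 0 then 1 else 0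

noncomputable def convPow {M N : ℕ} (A : Matrix (Fin M) (Fin N) ℂ) : ℕ → Matrix (Fin M) (Fin N) ℂ
  | 0 => convId
  | k+1 => conv (convPow A k) A

noncomputable def convPoly {M N : ℕ} (p : Polynomial ℂ) (A : Matrix (Fin M) (Fin N) ℂ) :
    Matrix (Fin M) (Fin N) ℂ :=
  ∑ k ∈ p.support, p.coeff k • convPow A k

namespace ConvAux

open Polynomial Finset

variable {M N : ℕ}

/-- double coefficient extraction -/
noncomputable def E (i j : ℕ) (P : Polynomial (Polynomial ℂ)) : ℂ := (P.coeff i).coeff j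

lemma E_mul (i j : ℕ) (P Q : Polynomial (Polynomial ℂ)) :
    E i j (P * Q) = ∑ x ∈ Finset.HasAntidiagonal.antidiagonal i, ∑ y ∈ Finset.HasAntidiagonal.antidiagonal j,
      E x.1 y.1 P * E x.2 y.2 Q := by
  unfold E
  rw [Polynomial.coeff_mul, Polynomial.finset_sum_coeff]
  exact Finset.sum_congr rfl fun x _ => by rw [Polynomial.coeff_mul]

/-- matrix to polynomial in two variables -/
noncomputable def T (X : Matrix (Fin M) (Fin N) ℂ) : Polynomial (Polynomial ℂ) :=
  ∑ i : Fin M, ∑ j : Fin N, Polynomial.monomial i.1 (Polynomial.monomial j.1 (X i j))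

lemma E_T (X : Matrix (Fin M) (Fin N) ℂ) (a : Fin M) (b : Fin N) :
    E a.1 b.1 (T X) = X a b := by
  have h1 : (T X).coeff a.1 = ∑ j : Fin N, Polynomial.monomial j.1 (X a j) := by
    unfold T
    rw [Polynomial.finset_sum_coeff, Finset.sum_eq_single a]
    · rw [Polynomial.finset_sum_coeff]
      exact Finset.sum_congr rfl fun j _ => by rw [Polynomial.coeff_monomial, if_pos rfl]
    · intro i _ hia
      rw [Polynomial.finset_sum_coeff]
      refine Finset.sum_eq_zero fun j _ => ?_
      rw [Polynomial.coeff_monomial, if_neg (fun h => hia (Fin.ext h))]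
    · intro h; exact absurd (Finset.mem_univ a) h
  unfold E
  rw [h1, Polynomial.finset_sum_coeff, Finset.sum_eq_single b]
  · rw [Polynomial.coeff_monomial, if_pos rfl]
  · intro j _ hjb
    rw [Polynomial.coeff_monomial, if_neg (fun h => hjb (Fin.ext h))]
  · intro h; exact absurd (Finset.mem_univ b) h

lemma sum_Iic_fin {n : ℕ} (i : Fin n) (g : ℕ → ℕ → ℂ) :
    (∑ l ∈ Finset.Iic i, g l.1 (i - l).1) = ∑ x ∈ Finset.HasAntidiagonal.antidiagonal i.1, g x.1 x.2 := by
  refine Finset.sum_nbij' (fun l => (l.1, i.1 - l.1))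
    (fun x => (⟨x.1 % n, Nat.mod_lt _ i.pos⟩ : Fin n)) ?_ ?_ ?_ ?_ ?_
  · intro l hl
    rw [Finset.mem_Iic, Fin.le_def] at hl
    simp only [Finset.HasAntidiagonal.mem_antidiagonal]
    omega
  · intro x hx
    rw [Finset.HasAntidiagonal.mem_antidiagonal] at hx
    rw [Finset.mem_Iic, Fin.le_def]
    simp only
    have hxn : x.1 < n := lt_of_le_of_lt (by omega : x.1 ≤ i.1) i.isLt
    rw [Nat.mod_eq_of_lt hxn]
    omega
  · intro l hl
    exact Fin.ext (by simp [Nat.mod_eq_of_lt l.isLt])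
  · intro x hx
    rw [Finset.HasAntidiagonal.mem_antidiagonal] at hx
    have hxn : x.1 < n := lt_of_le_of_lt (by omega : x.1 ≤ i.1) i.isLt
    simp only [Nat.mod_eq_of_lt hxn]
    exact Prod.ext rfl (by omega)
  · intro l hl
    rw [Finset.mem_Iic] at hl
    rw [Fin.coe_sub_iff_le.2 hl]

lemma conv_eq (A B : Matrix (Fin M) (Fin N) ℂ) (i : Fin M) (j : Fin N) :
    conv A B i j = E i.1 j.1 (T A * T B) := by
  calc conv A B i j
      = ∑ l ∈ Finset.Iic i, ∑ k ∈ Finset.Iic j,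
          E l.1 k.1 (T A) * E (i - l).1 (j - k).1 (T B) := by
        unfold conv
        exact Finset.sum_congr rfl fun l _ => Finset.sum_congr rfl fun k _ => by
          rw [E_T, E_T]
    _ = ∑ l ∈ Finset.Iic i, ∑ y ∈ Finset.HasAntidiagonal.antidiagonal j.1,
          E l.1 y.1 (T A) * E (i - l).1 y.2 (T B) :=
        Finset.sum_congr rfl fun l _ =>
          sum_Iic_fin j (fun c d => E l.1 c (T A) * E (i - l).1 d (T B))
    _ = ∑ x ∈ Finset.HasAntidiagonal.antidiagonal i.1, ∑ y ∈ Finset.HasAntidiagonal.antidiagonal j.1,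
          E x.1 y.1 (T A) * E x.2 y.2 (T B) :=
        sum_Iic_fin i (fun a b => ∑ y ∈ Finset.HasAntidiagonal.antidiagonal j.1,
          E a y.1 (T A) * E b y.2 (T B))
    _ = E i.1 j.1 (T A * T B) := (E_mul _ _ _ _).symm

lemma E_agree_mul (i j : ℕ) (P P' R : Polynomial (Polynomial ℂ))
    (h : ∀ a ≤ i, ∀ b ≤ j, E a b P = E a b P') :
    E i j (P * R) = E i j (P' * R) := by
  rw [E_mul, E_mul]
  refine Finset.sum_congr rfl fun x hx => Finset.sum_congr rfl fun y hy => ?_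
  rw [Finset.HasAntidiagonal.mem_antidiagonal] at hx hy
  rw [h x.1 (by omega) y.1 (by omega)]

lemma E_T_conv (A B : Matrix (Fin M) (Fin N) ℂ) {a b : ℕ} (ha : a < M) (hb : b < N) :
    E a b (T (conv A B)) = E a b (T A * T B) := by
  have h1 := E_T (conv A B) ⟨a, ha⟩ ⟨b, hb⟩
  have h2 := conv_eq A B ⟨a, ha⟩ ⟨b, hb⟩
  simpa [h2] using h1

lemma conv_comm (A B : Matrix (Fin M) (Fin N) ℂ) : conv A B = conv B A := by
  funext i j
  rw [conv_eq, conv_eq, mul_comm]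

lemma conv_assoc (A B C : Matrix (Fin M) (Fin N) ℂ) :
    conv (conv A B) C = conv A (conv B C) := by
  funext i j
  have h1 : conv (conv A B) C i j = E i.1 j.1 ((T A * T B) * T C) := by
    rw [conv_eq]
    exact E_agree_mul _ _ _ _ _ fun a ha b hb =>
      E_T_conv A B (lt_of_le_of_lt ha i.isLt) (lt_of_le_of_lt hb j.isLt)
  have h2 : conv A (conv B C) i j = E i.1 j.1 ((T B * T C) * T A) := by
    rw [conv_eq, mul_comm (T A)]
    exact E_agree_mul _ _ _ _ _ fun a ha b hb =>
      E_T_conv B C (lt_of_le_of_lt ha i.isLt) (lt_of_le_of_lt hb j.isLt)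
  rw [h1, h2]
  ring_nf

lemma one_conv (A : Matrix (Fin M) (Fin N) ℂ) : conv convId A = A := by
  funext i j
  unfold conv convId
  rw [Finset.sum_eq_single (⟨0, i.pos⟩ : Fin M)]
  · rw [Finset.sum_eq_single (⟨0, j.pos⟩ : Fin N)]
    · have hi : i - (⟨0, i.pos⟩ : Fin M) = i := by
        refine Fin.ext ?_
        rw [Fin.coe_sub_iff_le.2 (by rw [Fin.le_def]; exact Nat.zero_le _)]
        simp
      have hj : j - (⟨0, j.pos⟩ : Fin N) = j := by
        refine Fin.ext ?_
        rw [Fin.coe_sub_iff_le.2 (by rw [Fin.le_def]; exact Nat.zero_le _)]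
        simp
      rw [hi, hj, if_pos ⟨rfl, rfl⟩, one_mul]
    · intro k _ hk
      rw [if_neg, zero_mul]
      rintro ⟨h0, hk0⟩
      exact hk (Fin.ext hk0)
    · intro h
      exact absurd (Finset.mem_Iic.2 (by rw [Fin.le_def]; exact Nat.zero_le _)) h
  · intro l _ hl
    refine Finset.sum_eq_zero fun k _ => ?_
    rw [if_neg, zero_mul]
    rintro ⟨hl0, h0⟩
    exact hl (Fin.ext hl0)
  · intro h
    exact absurd (Finset.mem_Iic.2 (by rw [Fin.le_def]; exact Nat.zero_le _)) h

lemma conv_add (A B C : Matrix (Fin M) (Fin N) ℂ) :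
    conv A (B + C) = conv A B + conv A C := by
  funext i j
  simp [conv, Matrix.add_apply, mul_add, Finset.sum_add_distrib]

lemma add_conv (A B C : Matrix (Fin M) (Fin N) ℂ) :
    conv (A + B) C = conv A C + conv B C := by
  funext i j
  simp [conv, Matrix.add_apply, add_mul, Finset.sum_add_distrib]

lemma conv_zero (A : Matrix (Fin M) (Fin N) ℂ) : conv A 0 = 0 := by
  funext i j
  simp [conv]

lemma zero_conv (A : Matrix (Fin M) (Fin N) ℂ) : conv 0 A = 0 := by
  funext i j
  simp [conv]

lemma smul_conv (c : ℂ) (A B : Matrix (Fin M) (Fin N) ℂ) :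
    conv (c • A) B = c • conv A B := by
  funext i j
  simp [conv, Matrix.smul_apply, Finset.mul_sum, mul_assoc]

lemma conv_smul (c : ℂ) (A B : Matrix (Fin M) (Fin N) ℂ) :
    conv A (c • B) = c • conv A B := by
  rw [conv_comm, smul_conv, conv_comm]

/-- type synonym carrying the convolution ring structure -/
def CR (M N : ℕ) : Type := Matrix (Fin M) (Fin N) ℂ

def toCR (A : Matrix (Fin M) (Fin N) ℂ) : CR M N := A

instance : AddCommGroup (CR M N) :=
  inferInstanceAs (AddCommGroup (Matrix (Fin M) (Fin N) ℂ))

noncomputable instance : CommRing (CR M N) :=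
  { (show AddCommGroup (CR M N) from inferInstance) with
    mul := conv
    one := convId
    left_distrib := conv_add
    right_distrib := add_conv
    zero_mul := zero_conv
    mul_zero := conv_zero
    mul_assoc := conv_assoc
    one_mul := one_conv
    mul_one := fun a => (conv_comm a convId).trans (one_conv a)
    mul_comm := conv_comm }

lemma mul_def (x y : CR M N) : x * y = conv x y := rfl

lemma one_def : (1 : CR M N) = convId := rfl

/-- the structural ring hom ℂ → CR M N -/
noncomputable def fRH (M N : ℕ) : ℂ →+* CR M N where
  toFun c := c • (convId : Matrix (Fin M) (Fin N) ℂ)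
  map_one' := by
    show ((1 : ℂ) • convId : Matrix (Fin M) (Fin N) ℂ) = convId
    rw [one_smul]
  map_mul' c d := by
    show ((c * d) • convId : Matrix (Fin M) (Fin N) ℂ) = conv (c • convId) (d • convId)
    rw [smul_conv, conv_smul, one_conv convId, smul_smul]
  map_zero' := by
    show ((0 : ℂ) • convId : Matrix (Fin M) (Fin N) ℂ) = 0
    rw [zero_smul]
  map_add' c d := by
    show ((c + d) • convId : Matrix (Fin M) (Fin N) ℂ) = c • convId + d • convId
    rw [add_smul]
    rfl

lemma fRH_apply (c : ℂ) : fRH M N c = c • (convId : Matrix (Fin M) (Fin N) ℂ) := by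
  unfold fRH; rfl

lemma pow_def (A : CR M N) (n : ℕ) : A ^ n = convPow A n := by
  induction n with
  | zero => rw [pow_zero]; rfl
  | succ n ih => rw [pow_succ, ih]; rfl

lemma convPoly_eq (p : Polynomial ℂ) (A : Matrix (Fin M) (Fin N) ℂ) :
    convPoly p A = Polynomial.eval₂ (fRH M N) (toCR A) p := by
  rw [Polynomial.eval₂_eq_sum, Polynomial.sum_def]
  unfold convPoly
  refine Finset.sum_congr rfl fun k _ => ?_
  rw [pow_def, fRH_apply]
  show p.coeff k • convPow A k = conv (p.coeff k • convId) (convPow (toCR A) k)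
  rw [smul_conv, one_conv]
  exact congrArg (fun X => p.coeff k • X) rfl

lemma convPow_nilpotent (B : Matrix (Fin M) (Fin N) ℂ)
    (h0 : ∀ (i : Fin M) (j : Fin N), i.1 = 0 → j.1 = 0 → B i j = 0)
    (n : ℕ) (i : Fin M) (j : Fin N) (h : i.1 + j.1 < n) : convPow B n i j = 0 := by
  induction n generalizing i j with
  | zero => omega
  | succ n ih =>
    show conv (convPow B n) B i j = 0
    unfold conv
    refine Finset.sum_eq_zero fun l hl => Finset.sum_eq_zero fun k hk => ?_
    rw [Finset.mem_Iic, Fin.le_def] at hl hk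
    by_cases hc : l.1 + k.1 < n
    · rw [ih l k hc, zero_mul]
    · have hli : l = i := Fin.ext (by omega)
      have hkj : k = j := Fin.ext (by omega)
      subst hli hkj
      have hii : (l - l).1 = 0 := by rw [Fin.coe_sub_iff_le.2 (le_refl l)]; omega
      have hkk : (k - k).1 = 0 := by rw [Fin.coe_sub_iff_le.2 (le_refl k)]; omega
      rw [h0 _ _ hii hkk, mul_zero]

end ConvAux

open Polynomial ConvAux

theorem conv_minimal_polynomial (M N : ℕ) (hM : 0 < M) (hN : 0 < N)
    (A : Matrix (Fin M) (Fin N) ℂ) (p : Polynomial ℂ)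
    (hmonic : p.Monic) (hne : p ≠ 0) (hann : convPoly p A = 0)
    (hmin : ∀ q : Polynomial ℂ, q.Monic → q ≠ 0 → q.natDegree < p.natDegree →
      convPoly q A ≠ 0) :
    ∃ κ : ℕ, 1 ≤ κ ∧ κ ≤ M + N - 1 ∧
      p = (Polynomial.X - Polynomial.C (A ⟨0, hM⟩ ⟨0, hN⟩)) ^ κ := by
  classical
  set a : ℂ := A ⟨0, hM⟩ ⟨0, hN⟩ with ha
  set n : ℕ := M + N - 1 with hn
  set B : Matrix (Fin M) (Fin N) ℂ := A - a • convId with hB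
  have hB0 : ∀ (i : Fin M) (j : Fin N), i.1 = 0 → j.1 = 0 → B i j = 0 := by
    intro i j hi hj
    have hi' : i = ⟨0, hM⟩ := Fin.ext hi
    have hj' : j = ⟨0, hN⟩ := Fin.ext hj
    subst hi' hj'
    simp [hB, convId, Matrix.sub_apply, Matrix.smul_apply, ha]
  -- the evaluation ring hom
  set Φ : Polynomial ℂ →+* CR M N :=
    Polynomial.eval₂RingHom (fRH M N) (toCR A) with hΦdef
  have hΦ : ∀ q : Polynomial ℂ, convPoly q A = Φ q := fun q => convPoly_eq q A
  have hΦX : Φ (X - C a) = (toCR B) := by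
    rw [map_sub, hΦdef]
    show Polynomial.eval₂ (fRH M N) _ X - Polynomial.eval₂ (fRH M N) _ (C a) = _
    rw [Polynomial.eval₂_X, Polynomial.eval₂_C]
    show toCR A - fRH M N a = toCR B
    rw [fRH_apply]
    show A - a • convId = B
    exact hB.symm
  -- (X - C a)^n annihilates A
  have hq : convPoly ((X - C a) ^ n) A = 0 := by
    rw [hΦ, map_pow, hΦX, pow_def]
    show convPow B n = (0 : Matrix (Fin M) (Fin N) ℂ)
    funext i j
    refine convPow_nilpotent B hB0 n i j ?_
    have := i.isLt
    have := j.isLt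
    omega
  -- p divides (X - C a)^n
  have hannΦ : Φ p = 0 := by rw [← hΦ]; exact hann
  have hqΦ : Φ ((X - C a) ^ n) = 0 := by rw [← hΦ]; exact hq
  have hr : ((X - C a) ^ n) %ₘ p = 0 := by
    by_contra hrne
    set r : Polynomial ℂ := ((X - C a) ^ n) %ₘ p with hrdef
    have hreq : r = (X - C a) ^ n - p * ((X - C a) ^ n /ₘ p) :=
      eq_sub_of_add_eq (Polynomial.modByMonic_add_div _ p)
    have hr0 : Φ r = 0 := by
      rw [hreq, map_sub, map_mul, hqΦ, hannΦ, zero_mul, sub_zero]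
    set r' : Polynomial ℂ := r * C r.leadingCoeff⁻¹ with hr'def
    have hmon : r'.Monic := Polynomial.monic_mul_leadingCoeff_inv hrne
    have hlcne : r.leadingCoeff⁻¹ ≠ 0 :=
      inv_ne_zero (Polynomial.leadingCoeff_ne_zero.2 hrne)
    have hdeg : r'.natDegree < p.natDegree := by
      have h1 : r'.natDegree = r.natDegree := by
        rw [hr'def, Polynomial.natDegree_mul hrne (Polynomial.C_ne_zero.2 hlcne),
          Polynomial.natDegree_C, add_zero]
      rw [h1]
      exact Polynomial.natDegree_lt_natDegree hrne
        (Polynomial.degree_modByMonic_lt _ hmonic)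
    have hr'0 : convPoly r' A = 0 := by
      rw [hΦ, hr'def, map_mul, hr0, zero_mul]
      rfl
    exact hmin r' hmon hmon.ne_zero hdeg hr'0
  have hdvd : p ∣ (X - C a) ^ n := by
    have := Polynomial.modByMonic_add_div ((X - C a) ^ n) p
    rw [hr, zero_add] at this
    exact ⟨_, this.symm⟩
  obtain ⟨κ, hκn, hassoc⟩ := (dvd_prime_pow (Polynomial.prime_X_sub_C a) n).1 hdvd
  have hp : p = (X - C a) ^ κ :=
    Polynomial.eq_of_monic_of_associated hmonic ((Polynomial.monic_X_sub_C a).pow κ) hassoc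
  refine ⟨κ, ?_, hκn, hp⟩
  by_contra hκ0
  have hκ : κ = 0 := by omega
  rw [hκ, pow_zero] at hp
  have h1 : convPoly (1 : Polynomial ℂ) A = convId := by
    rw [hΦ, map_one, one_def]
  rw [hp, h1] at hann
  have := congrFun (congrFun hann ⟨0, hM⟩) ⟨0, hN⟩
  simp [convId] at this
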